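/- Let p₁, p₂ be real polynomials with p₁(0) = 0, p₁'(0) = 1, p₂(0) = 1, satisfying 2 p₁' p₂ − p₁ p₂' = 2 identically, with deg p₂ > 0. Then deg p₂ = 2 · deg p₁, and there is a constant A with p₁(x) = x and p₂(x) = 1 + A x². -/

import Mathlib

open Polynomial

private lemma deriv_ne_zero {p : Polynomial ℝ} (hp : p.natDegree ≠ 0) :
    derivative p ≠ 0 ∧ (derivative p).natDegree = p.natDegree - 1 := by
  have h := degree_derivative_eq p (Nat.pos_of_ne_zero hp)
  constructor
  · intro h0
    rw [h0, degree_zero] at h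
    exact absurd h.symm (by simp)
  · exact natDegree_eq_of_degree_eq_some h

private lemma aux_deg (p q : Polynomial ℝ) (hm : p.natDegree ≠ 0)
    (hid : 2 * derivative p * q - p * derivative q = 2) :
    q.natDegree = 2 * p.natDegree ∨ (p.natDegree = 1 ∧ q.natDegree = 0) := by
  obtain ⟨m', hm'⟩ := Nat.exists_eq_succ_of_ne_zero hm
  have hp0 : p ≠ 0 := fun h => hm (by simp [h])
  obtain ⟨hp', hdp⟩ := deriv_ne_zero hm
  have hdp' : (derivative p).natDegree = m' := by omega
  have hq0 : q ≠ 0 := by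
    rintro rfl
    simp only [mul_zero, derivative_zero, sub_zero, zero_sub, neg_eq_iff_eq_neg] at hid
    exact absurd hid (by intro h; simpa using congrArg (fun r => r.coeff 0) h)
  by_cases hd : q.natDegree = 0
  · right
    refine ⟨?_, hd⟩
    have hc : q = C (q.coeff 0) := eq_C_of_natDegree_eq_zero hd
    have hcne : q.coeff 0 ≠ 0 := fun h => hq0 (by rw [hc, h, map_zero])
    rw [hc] at hid
    simp only [derivative_C, mul_zero, sub_zero] at hid
    have h2 : (2 : Polynomial ℝ) ≠ 0 := by norm_num
    have := congrArg natDegree hid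
    rw [natDegree_mul (mul_ne_zero h2 hp') (fun h => hcne (by simpa using h)),
      natDegree_mul h2 hp'] at this
    simp only [natDegree_ofNat, natDegree_C, zero_add, add_zero, hdp'] at this
    omega
  · left
    obtain ⟨d', hd''⟩ := Nat.exists_eq_succ_of_ne_zero hd
    obtain ⟨hq', hdq⟩ := deriv_ne_zero hd
    have hdq' : (derivative q).natDegree = d' := by omega
    have h2 : (2 : Polynomial ℝ) ≠ 0 := by norm_num
    set a := p.leadingCoeff with ha
    set b := q.leadingCoeff with hb
    have ha0 : a ≠ 0 := leadingCoeff_ne_zero.2 hp0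
    have hb0 : b ≠ 0 := leadingCoeff_ne_zero.2 hq0
    have key := congrArg (fun r => r.coeff (m' + d' + 1)) hid
    simp only [coeff_sub] at key
    have e1 : (2 * derivative p * q).coeff (m' + d' + 1)
        = 2 * ((m' : ℝ) + 1) * a * b := by
      have h := coeff_mul_degree_add_degree (2 * derivative p) q
      rw [natDegree_mul h2 hp', natDegree_ofNat, zero_add, hdp', hd''] at h
      have : m' + (d' + 1) = m' + d' + 1 := by omega
      rw [this] at h
      rw [h, leadingCoeff_mul]
      have hlc2 : (2 : Polynomial ℝ).leadingCoeff = 2 := by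
        simp [leadingCoeff]
      have hlcp : (derivative p).leadingCoeff = a * ((m' : ℝ) + 1) := by
        rw [leadingCoeff, hdp', coeff_derivative, ha, leadingCoeff, hm']
      rw [hlc2, hlcp]
      ring
    have e2 : (p * derivative q).coeff (m' + d' + 1)
        = a * (b * ((d' : ℝ) + 1)) := by
      have h := coeff_mul_degree_add_degree p (derivative q)
      rw [hdq', hm'] at h
      have : m' + 1 + d' = m' + d' + 1 := by omega
      rw [this] at h
      rw [h]
      congr 1
      rw [leadingCoeff, hdq', coeff_derivative, hb, leadingCoeff, hd'']
    have e3 : (2 : Polynomial ℝ).coeff (m' + d' + 1) = 0 := by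
      simp
    rw [e1, e2, e3] at key
    have hab : a * b ≠ 0 := mul_ne_zero ha0 hb0
    have hcast : 2 * ((m' : ℝ) + 1) = (d' : ℝ) + 1 := by
      have h4 : (2 * ((m' : ℝ) + 1) - ((d' : ℝ) + 1)) * (a * b) = 0 := by
        ring_nf
        ring_nf at key
        linarith
      rcases mul_eq_zero.1 h4 with h | h
      · linarith
      · exact absurd h hab
    have : d' + 1 = 2 * (m' + 1) := by exact_mod_cast hcast.symm
    omega

theorem key_polynomial_identity_solution
    (p₁ p₂ : Polynomial ℝ)
    (h10 : p₁.eval 0 = 0) (h11 : (derivative p₁).eval 0 = 1)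
    (h20 : p₂.eval 0 = 1)
    (hid : 2 * derivative p₁ * p₂ - p₁ * derivative p₂ = 2)
    (hdeg : 0 < p₂.natDegree) :
    p₂.natDegree = 2 * p₁.natDegree ∧
    ∃ A : ℝ, p₁ = X ∧ p₂ = 1 + C A * X ^ 2 := by
  -- p₁ has positive degree
  have hm : p₁.natDegree ≠ 0 := by
    intro h0
    rw [derivative_of_natDegree_zero h0] at h11
    simp at h11
  -- degree of p₂ is twice that of p₁
  have hn : p₂.natDegree = 2 * p₁.natDegree := by
    rcases aux_deg p₁ p₂ hm hid with h | ⟨_, h⟩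
    · exact h
    · omega
  refine ⟨hn, ?_⟩
  have hp0 : p₁ ≠ 0 := fun h => hm (by simp [h])
  set a := p₁.leadingCoeff with ha
  have ha0 : a ≠ 0 := leadingCoeff_ne_zero.2 hp0
  set A := p₂.coeff (2 * p₁.natDegree) / a ^ 2 with hA
  set s := p₂ - C A * p₁ ^ 2 with hs
  -- s satisfies the same identity
  have hids : 2 * derivative p₁ * s - p₁ * derivative s = 2 := by
    rw [hs, derivative_sub, derivative_C_mul, derivative_sq, map_ofNat]
    linear_combination hid
  have hs0 : s ≠ 0 := by
    rintro h0
    rw [h0] at hids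
    simp only [mul_zero, derivative_zero, sub_zero] at hids
    exact absurd hids (by intro h; simpa using congrArg (fun r => r.coeff 0) h)
  -- the top coefficient of s vanishes
  have hcoeff : s.coeff (2 * p₁.natDegree) = 0 := by
    rw [hs, coeff_sub, coeff_C_mul]
    have h1 : (p₁ ^ 2).coeff (2 * p₁.natDegree) = a ^ 2 := by
      have := coeff_mul_degree_add_degree p₁ p₁
      rw [← two_mul] at this
      rw [sq, sq, this]
    rw [h1, hA]
    field_simp
    simp
  have hsd : s.natDegree ≠ 2 * p₁.natDegree := by
    intro h
    apply hs0
    rw [← leadingCoeff_eq_zero, leadingCoeff, h]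
    exact hcoeff
  rcases aux_deg p₁ s hm hids with h | ⟨hm1, hsdeg⟩
  · exact absurd h hsd
  -- p₁ has degree 1, so p₁ = X
  have hp₁ : p₁ = X := by
    have h := eq_X_add_C_of_natDegree_le_one (le_of_eq hm1)
    have hc0 : p₁.coeff 0 = 0 := by rwa [coeff_zero_eq_eval_zero]
    have hc1 : p₁.coeff 1 = 1 := by
      have : (derivative p₁).coeff 0 = p₁.coeff 1 := by
        simp [coeff_derivative]
      rw [← this, coeff_zero_eq_eval_zero, h11]
    rw [h, hc0, hc1]
    simp
  -- s is a constant, equal to 1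
  have hsc : s = C (s.coeff 0) := eq_C_of_natDegree_eq_zero hsdeg
  have hs1 : s.coeff 0 = 1 := by
    have h0 : s.eval 0 = 1 := by
      rw [hs]
      simp [h20, hp₁]
    rw [coeff_zero_eq_eval_zero]
    exact h0
  refine ⟨A, hp₁, ?_⟩
  have : p₂ = C A * p₁ ^ 2 + s := by rw [hs]; ring
  rw [this, hsc, hs1, hp₁, map_one]
  ring
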